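/- Frame-dependence of entanglement for ℤ/2: Let V be the complex vector space of functions (ℤ/2) × (ℤ/2) → ℂ with standard basis e_{(g,h)}, and let U be the linear map determined on the basis by U e_{(g,h)} = e_{(−g, h−g)} (the change of quantum reference frame from A to B for the symmetry group ℤ/2, the two slots holding the states of the described systems). Then U(e_{(0,1)} + e_{(1,1)}) = e_{(0,1)} + e_{(1,0)}. The input vector is a product state (it equals (g,h) ↦ c(g)·d(h) with c(0) = c(1) = 1, d(0) = 0, d(1) = 1), while the output vector e_{(0,1)} + e_{(1,0)} admits no product decomposition: there exist no functions c, d : ℤ/2 → ℂ with (e_{(0,1)} + e_{(1,0)})(g,h) = c(g)·d(h) for all g, h. -/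

import Mathlib

/-- Standard basis vector `e_p` of the space of functions `(ℤ/2) × (ℤ/2) → ℂ`. -/
def basis2 (p : ZMod 2 × ZMod 2) : ZMod 2 × ZMod 2 → ℂ :=
  fun q => if q = p then 1 else 0

/-- Frame-dependence of entanglement for `ℤ/2`: the change of quantum reference frame
`U e_{(g,h)} = e_{(−g, h−g)}` maps the product state `e_{(0,1)} + e_{(1,1)}` to
`e_{(0,1)} + e_{(1,0)}`, which admits no product decomposition. -/
theorem entanglement_frame_dependence
    (U : (ZMod 2 × ZMod 2 → ℂ) →ₗ[ℂ] (ZMod 2 × ZMod 2 → ℂ))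
    (hU : ∀ g h : ZMod 2, U (basis2 (g, h)) = basis2 (-g, h - g)) :
    (U (basis2 (0, 1) + basis2 (1, 1)) = basis2 (0, 1) + basis2 (1, 0)) ∧
      (∃ c d : ZMod 2 → ℂ,
        (c 0 = 1 ∧ c 1 = 1 ∧ d 0 = 0 ∧ d 1 = 1) ∧
          (basis2 (0, 1) + basis2 (1, 1)) = fun p => c p.1 * d p.2) ∧
      ¬ ∃ c d : ZMod 2 → ℂ,
          ∀ g h : ZMod 2, (basis2 (0, 1) + basis2 (1, 0)) (g, h) = c g * d h := by
  refine ⟨?_, ?_, ?_⟩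
  · rw [map_add, hU 0 1, hU 1 1]
    norm_num
    congr 1
  · refine ⟨fun _ => 1, fun h => if h = 1 then 1 else 0, ⟨rfl, rfl, by norm_num, by norm_num⟩, ?_⟩
    funext p
    obtain ⟨g, h⟩ := p
    fin_cases g <;> fin_cases h <;> simp +decide [basis2, Prod.ext_iff]
  · rintro ⟨c, d, hcd⟩
    have h00 := hcd 0 0
    have h01 := hcd 0 1
    have h10 := hcd 1 0
    have h11 := hcd 1 1
    simp [basis2, Prod.ext_iff, show (0 : ZMod 2) ≠ 1 by decide, show (1 : ZMod 2) ≠ 0 by decide] at h00 h01 h10 h11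
    rcases h00 with h | h <;> rcases h11 with h' | h' <;>
      simp [h, h'] at h01 h10
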